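/- Let μ^r(n, n) denote the maximum matching size of a graph drawn from the with-replacement model G^r_{n,n}, and let μ(n, n) denote the maximum matching size of a graph drawn from the Erdős–Rényi model G_{n,n} (a uniformly random graph on n vertices with exactly n distinct edges). Then for every x, Pr[μ^r(n, n) ≥ x] ≥ Pr[μ(n, n) ≥ x + log n] · (1 − 1/log n). -/

import Mathlib

open Finset

/-- Sample space of the with-replacement random graph model `G^r_{n,m}`: the
`m` independent uniform edge samples, each a 2-element subset of the `n`
vertices; the resulting edge set is `Finset.univ.image f` (duplicates merged). -/
def edgeSamples (n m : ℕ) : Finset (Fin m → Finset (Fin n)) :=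
  Finset.univ.filter fun f => ∀ i, (f i).card = 2

/-- Sample space of the Erdős–Rényi model `G_{n,m}`: edge sets consisting of
exactly `m` distinct 2-element subsets of the `n` vertices. -/
def erGraphs (n m : ℕ) : Finset (Finset (Finset (Fin n))) :=
  ((Finset.univ.filter fun e : Finset (Fin n) => e.card = 2).powerset.filter
    fun E => E.card = m)

open scoped Classical in
/-- Probability of an event under the uniform distribution on a finite sample
space `Ω`. -/
noncomputable def uprob {α : Type*} [DecidableEq α] (Ω : Finset α) (p : α → Prop) : ℝ :=
  (Ω.filter p).card / Ω.card

open scoped Classical in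
/-- The maximum size of a matching in the graph on vertex set `V` whose edges
are the (two-element) sets in `E`: the largest cardinality of a set of
pairwise-disjoint edges. -/
noncomputable def matchingNumber {V : Type*} [DecidableEq V] (E : Finset (Finset V)) : ℕ :=
  (E.powerset.filter fun M : Finset (Finset V) =>
    (↑M : Set (Finset V)).PairwiseDisjoint id).sup Finset.card

/-! ### Auxiliary lemmas -/

open scoped Classical in
lemma matchingNumber_le_of_subset {V : Type*} [DecidableEq V] {E S : Finset (Finset V)}
    (h : E ⊆ S) : matchingNumber S ≤ matchingNumber E + (S \ E).card := by
  unfold matchingNumber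
  apply Finset.sup_le
  intro M hM
  simp only [mem_filter, mem_powerset] at hM
  obtain ⟨hMS, hMd⟩ := hM
  have h1 : (M ∩ E).card ≤ matchingNumber E := by
    apply Finset.le_sup (f := Finset.card)
    simp only [mem_filter, mem_powerset]
    refine ⟨inter_subset_right, hMd.subset ?_⟩
    exact_mod_cast (inter_subset_left : M ∩ E ⊆ M)
  have h2 : (M \ E).card ≤ (S \ E).card :=
    card_le_card (sdiff_subset_sdiff hMS (le_refl E))
  calc M.card = (M ∩ E).card + (M \ E).card := by
        rw [card_inter_add_card_sdiff]
    _ ≤ matchingNumber E + (S \ E).card := Nat.add_le_add h1 h2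

noncomputable def sCount (n : ℕ) (E : Finset (Finset (Fin n))) : ℕ :=
  ((edgeSamples n n).filter fun f => Finset.univ.image f = E).card

lemma sCount_eq (n : ℕ) {E E' : Finset (Finset (Fin n))}
    (hE : ∀ a ∈ E, a.card = 2) (hE' : ∀ a ∈ E', a.card = 2)
    (hc : E.card = E'.card) : sCount n E = sCount n E' := by
  classical
  let e : {a // a ∈ E} ≃ {a // a ∈ E'} := Finset.equivOfCardEq hc
  unfold sCount
  apply Finset.card_bij' (fun f _ => fun k => if h : f k ∈ E then (e ⟨f k, h⟩ : Finset (Fin n)) else ∅)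
    (fun g _ => fun k => if h : g k ∈ E' then ((e.symm ⟨g k, h⟩ : {a // a ∈ E}) : Finset (Fin n)) else ∅)
  · -- maps to
    intro f hf
    simp only [mem_filter, edgeSamples, mem_univ, true_and] at hf ⊢
    obtain ⟨hf2, hfim⟩ := hf
    have hmem : ∀ k, f k ∈ E := fun k => hfim ▸ Finset.mem_image_of_mem f (mem_univ k)
    constructor
    · intro k
      rw [dif_pos (hmem k)]
      exact hE' _ (e ⟨f k, hmem k⟩).2
    · apply Finset.Subset.antisymm
      · intro a ha
        rw [Finset.mem_image] at ha
        obtain ⟨k, _, hk⟩ := ha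
        rw [dif_pos (hmem k)] at hk
        exact hk ▸ (e ⟨f k, hmem k⟩).2
      · intro a ha
        have hmem2 : ((e.symm ⟨a, ha⟩ : {a // a ∈ E}) : Finset (Fin n)) ∈ image f univ := by
          rw [hfim]; exact (e.symm ⟨a, ha⟩).2
        obtain ⟨k, _, hk⟩ := Finset.mem_image.mp hmem2
        rw [Finset.mem_image]
        refine ⟨k, mem_univ k, ?_⟩
        rw [dif_pos (hmem k)]
        have : (⟨f k, hmem k⟩ : {a // a ∈ E}) = e.symm ⟨a, ha⟩ := Subtype.ext hk
        rw [this, Equiv.apply_symm_apply]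
  · -- maps back
    intro g hg
    simp only [mem_filter, edgeSamples, mem_univ, true_and] at hg ⊢
    obtain ⟨hg2, hgim⟩ := hg
    have hmem : ∀ k, g k ∈ E' := fun k => hgim ▸ Finset.mem_image_of_mem g (mem_univ k)
    constructor
    · intro k
      rw [dif_pos (hmem k)]
      exact hE _ (e.symm ⟨g k, hmem k⟩).2
    · apply Finset.Subset.antisymm
      · intro a ha
        rw [Finset.mem_image] at ha
        obtain ⟨k, _, hk⟩ := ha
        rw [dif_pos (hmem k)] at hk
        exact hk ▸ (e.symm ⟨g k, hmem k⟩).2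
      · intro a ha
        have hmem2 : ((e ⟨a, ha⟩ : {a // a ∈ E'}) : Finset (Fin n)) ∈ image g univ := by
          rw [hgim]; exact (e ⟨a, ha⟩).2
        obtain ⟨k, _, hk⟩ := Finset.mem_image.mp hmem2
        rw [Finset.mem_image]
        refine ⟨k, mem_univ k, ?_⟩
        rw [dif_pos (hmem k)]
        have h2 : (⟨g k, hmem k⟩ : {a // a ∈ E'}) = e ⟨a, ha⟩ := Subtype.ext hk
        rw [h2, Equiv.symm_apply_apply]
  · -- left inverse
    intro f hf
    simp only [mem_filter, edgeSamples, mem_univ, true_and] at hf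
    obtain ⟨hf2, hfim⟩ := hf
    have hmem : ∀ k, f k ∈ E := fun k => hfim ▸ Finset.mem_image_of_mem f (mem_univ k)
    funext k
    simp only [dif_pos (hmem k), dif_pos (e ⟨f k, hmem k⟩).2, Subtype.coe_eta,
      Equiv.symm_apply_apply]
  · -- right inverse
    intro g hg
    simp only [mem_filter, edgeSamples, mem_univ, true_and] at hg
    obtain ⟨hg2, hgim⟩ := hg
    have hmem : ∀ k, g k ∈ E' := fun k => hgim ▸ Finset.mem_image_of_mem g (mem_univ k)
    funext k
    simp only [dif_pos (hmem k), dif_pos (e.symm ⟨g k, hmem k⟩).2, Subtype.coe_eta,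
      Equiv.apply_symm_apply]

lemma edgeSamples_eq_piFinset (n m : ℕ) :
    edgeSamples n m = Fintype.piFinset (fun _ : Fin m =>
      Finset.univ.filter fun e : Finset (Fin n) => e.card = 2) := by
  ext f
  simp [edgeSamples, Fintype.mem_piFinset]

lemma card_edgeSamples (n m : ℕ) :
    (edgeSamples n m).card =
      ((Finset.univ.filter fun e : Finset (Fin n) => e.card = 2).card) ^ m := by
  rw [edgeSamples_eq_piFinset, Fintype.card_piFinset]
  simp

lemma card_collision (n m : ℕ) {i j : Fin m} (hij : j ≠ i) :
    ((edgeSamples n m).filter fun f => f j = f i).card ≤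
      ((Finset.univ.filter fun e : Finset (Fin n) => e.card = 2).card) ^ (m - 1) := by
  classical
  set 𝓔 := Finset.univ.filter fun e : Finset (Fin n) => e.card = 2 with h𝓔
  have key := Finset.card_le_card_of_injOn
    (s := (edgeSamples n m).filter fun f => f j = f i)
    (f := fun (f : Fin m → Finset (Fin n)) => (fun k : {k : Fin m // k ≠ i} => f k))
    (t := Fintype.piFinset (fun _ : {k : Fin m // k ≠ i} => 𝓔)) ?_ ?_
  · calc ((edgeSamples n m).filter fun f => f j = f i).card
        ≤ (Fintype.piFinset (fun _ : {k : Fin m // k ≠ i} => 𝓔)).card := key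
      _ = 𝓔.card ^ (m - 1) := by
          rw [Fintype.card_piFinset]
          rw [Finset.prod_const]
          congr 1
          rw [Finset.card_univ, Fintype.card_subtype (p := fun k : Fin m => k ≠ i)]
          rw [show (univ.filter fun k : Fin m => k ≠ i) = univ.erase i by
            ext k; simp [Finset.mem_erase, and_comm]]
          rw [Finset.card_erase_of_mem (mem_univ i), Finset.card_univ, Fintype.card_fin]
  · intro f hf
    simp only [mem_coe, mem_filter, edgeSamples, mem_univ, true_and] at hf
    rw [mem_coe, Fintype.mem_piFinset]
    intro k
    simp only [h𝓔, mem_filter, mem_univ, true_and]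
    exact hf.1 k
  · intro f hf g hg hfg
    simp only [mem_coe, mem_filter, edgeSamples, mem_univ, true_and] at hf hg
    funext k
    by_cases hk : k = i
    · subst hk
      have := congrFun hfg ⟨j, hij⟩
      simp only at this
      rw [← hf.2, ← hg.2]
      exact this
    · exact congrFun hfg ⟨k, hk⟩

lemma sub_card_image_le (n : ℕ) (f : Fin n → Finset (Fin n)) :
    n - (Finset.univ.image f).card ≤
      (Finset.univ.filter fun i : Fin n => ∃ j, j < i ∧ f j = f i).card := by
  classical
  have hsplit := Finset.card_filter_add_card_filter_not
    (s := (univ : Finset (Fin n))) (p := fun i : Fin n => ∃ j, j < i ∧ f j = f i)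
  have hc : (univ.filter fun i : Fin n => ¬∃ j, j < i ∧ f j = f i).card ≤
      (univ.image f).card := by
    rw [← Finset.card_image_of_injOn (f := f)]
    · exact Finset.card_le_card (Finset.image_subset_image (Finset.filter_subset _ _))
    · intro a ha b hb hab
      simp only [mem_coe, mem_filter, mem_univ, true_and] at ha hb
      by_contra hne
      rcases lt_or_gt_of_ne hne with h | h
      · exact hb ⟨a, h, hab⟩
      · exact ha ⟨b, h, hab.symm⟩
  rw [Finset.card_univ, Fintype.card_fin] at hsplit
  omega

lemma card_supersets_le (n d m : ℕ) (𝓔 : Finset (Finset (Fin n)))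
    (E : Finset (Finset (Fin n))) (hE : E ⊆ 𝓔) (hEd : E.card = d) :
    (((𝓔.powersetCard m).filter fun S => E ⊆ S)).card ≤ (𝓔.card - d).choose (m - d) := by
  classical
  have key := Finset.card_le_card_of_injOn (f := fun S => S \ E)
    (s := (𝓔.powersetCard m).filter fun S => E ⊆ S)
    (t := (𝓔 \ E).powersetCard (m - d)) ?_ ?_
  · calc _ ≤ ((𝓔 \ E).powersetCard (m - d)).card := key
      _ = (𝓔.card - d).choose (m - d) := by
          rw [Finset.card_powersetCard, Finset.card_sdiff_of_subset hE, hEd]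
  · intro S hS
    simp only [mem_coe, mem_filter, Finset.mem_powersetCard] at hS ⊢
    obtain ⟨⟨hS𝓔, hSm⟩, hES⟩ := hS
    refine ⟨Finset.sdiff_subset_sdiff hS𝓔 (le_refl E), ?_⟩
    rw [Finset.card_sdiff_of_subset hES, hSm, hEd]
  · intro S1 h1 S2 h2 h12
    simp only [mem_coe, mem_filter, Finset.mem_powersetCard] at h1 h2
    have e1 : E ∪ S1 \ E = S1 := Finset.union_sdiff_of_subset h1.2
    have e2 : E ∪ S2 \ E = S2 := Finset.union_sdiff_of_subset h2.2
    simp only at h12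
    rw [← e1, ← e2, h12]

lemma sum_collisions_le (n : ℕ) (hn : 1 ≤ n) :
    (∑ f ∈ edgeSamples n n, (n - (Finset.univ.image f).card)) ≤
      ((Finset.univ.filter fun e : Finset (Fin n) => e.card = 2).card) ^ n := by
  classical
  set N := (Finset.univ.filter fun e : Finset (Fin n) => e.card = 2).card with hN
  calc (∑ f ∈ edgeSamples n n, (n - (Finset.univ.image f).card))
      ≤ ∑ f ∈ edgeSamples n n,
          (Finset.univ.filter fun i : Fin n => ∃ j, j < i ∧ f j = f i).card :=
        Finset.sum_le_sum fun f _ => sub_card_image_le n f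
    _ = ∑ f ∈ edgeSamples n n, ∑ i : Fin n,
          (if ∃ j, j < i ∧ f j = f i then 1 else 0) := by
        refine Finset.sum_congr rfl fun f _ => ?_
        rw [Finset.card_filter]
    _ = ∑ i : Fin n, ∑ f ∈ edgeSamples n n,
          (if ∃ j, j < i ∧ f j = f i then 1 else 0) := Finset.sum_comm
    _ = ∑ i : Fin n, ((edgeSamples n n).filter fun f => ∃ j, j < i ∧ f j = f i).card := by
        refine Finset.sum_congr rfl fun i _ => ?_
        rw [Finset.card_filter]
    _ ≤ ∑ i : Fin n, (i : ℕ) * N ^ (n - 1) := by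
        refine Finset.sum_le_sum fun i _ => ?_
        have hsub : ((edgeSamples n n).filter fun f => ∃ j, j < i ∧ f j = f i) ⊆
            (Finset.Iio i).biUnion fun j => (edgeSamples n n).filter fun f => f j = f i := by
          intro f hf
          simp only [mem_filter] at hf
          obtain ⟨hf1, j, hj, hfj⟩ := hf
          exact Finset.mem_biUnion.mpr ⟨j, Finset.mem_Iio.mpr hj, Finset.mem_filter.mpr ⟨hf1, hfj⟩⟩
        calc ((edgeSamples n n).filter fun f => ∃ j, j < i ∧ f j = f i).card
            ≤ ((Finset.Iio i).biUnion fun j =>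
                (edgeSamples n n).filter fun f => f j = f i).card := Finset.card_le_card hsub
          _ ≤ ∑ j ∈ Finset.Iio i, ((edgeSamples n n).filter fun f => f j = f i).card :=
              Finset.card_biUnion_le
          _ ≤ ∑ j ∈ Finset.Iio i, N ^ (n - 1) := by
              refine Finset.sum_le_sum fun j hj => ?_
              exact card_collision n n (Finset.mem_Iio.mp hj).ne
          _ = (i : ℕ) * N ^ (n - 1) := by rw [Finset.sum_const, Fin.card_Iio, smul_eq_mul]
    _ = (∑ i : Fin n, (i : ℕ)) * N ^ (n - 1) := by rw [Finset.sum_mul]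
    _ = n.choose 2 * N ^ (n - 1) := by
        rw [Fin.sum_univ_eq_sum_range (fun i => i) n, Finset.sum_range_id, Nat.choose_two_right]
    _ = N * N ^ (n - 1) := by
        congr 1
        rw [hN]
        rw [show (Finset.univ.filter fun e : Finset (Fin n) => e.card = 2)
            = Finset.univ.powersetCard 2 by
          rw [Finset.powersetCard_eq_filter, Finset.powerset_univ]]
        rw [Finset.card_powersetCard, Finset.card_univ, Fintype.card_fin]
    _ = N ^ n := by
        rw [← pow_succ']
        congr 1
        omega

lemma filter_image_partition (n : ℕ) (p : Finset (Finset (Fin n)) → Prop) [DecidablePred p] :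
    ((edgeSamples n n).filter fun f => p (Finset.univ.image f)).card =
      ∑ E ∈ ((Finset.univ.filter fun e : Finset (Fin n) => e.card = 2).powerset.filter p),
        sCount n E := by
  classical
  rw [Finset.card_eq_sum_card_fiberwise (f := fun f : Fin n → Finset (Fin n) =>
      Finset.univ.image f)
    (t := (Finset.univ.filter fun e : Finset (Fin n) => e.card = 2).powerset.filter p)]
  · refine Finset.sum_congr rfl fun E hE => ?_
    simp only [mem_filter, mem_powerset] at hE
    unfold sCount
    congr 1
    rw [Finset.filter_filter]
    apply Finset.filter_congr
    intro f hf
    constructor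
    · exact fun h => h.2
    · exact fun h => ⟨h ▸ hE.2, h⟩
  · intro f hf
    simp only [mem_coe, mem_filter, edgeSamples, mem_univ, true_and] at hf ⊢
    refine ⟨Finset.mem_powerset.mpr ?_, hf.2⟩
    intro a ha
    obtain ⟨k, _, hk⟩ := Finset.mem_image.mp ha
    simp only [mem_filter, mem_univ, true_and]
    exact hk ▸ hf.1 k

lemma shadow_bound (n d : ℕ) (x L : ℝ) (hd : d ≤ n) (hL : (n : ℝ) - d ≤ L) :
    ((erGraphs n n).filter fun S => (matchingNumber S : ℝ) ≥ x + L).card * n.choose d ≤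
      ((((Finset.univ.filter fun e : Finset (Fin n) => e.card = 2)).powersetCard d).filter
          fun E => (matchingNumber E : ℝ) ≥ x).card *
        (((Finset.univ.filter fun e : Finset (Fin n) => e.card = 2)).card - d).choose (n - d) := by
  classical
  set 𝓔 := Finset.univ.filter fun e : Finset (Fin n) => e.card = 2 with h𝓔
  set B := (erGraphs n n).filter fun S => (matchingNumber S : ℝ) ≥ x + L with hB
  set Gd := ((𝓔.powersetCard d).filter fun E => (matchingNumber E : ℝ) ≥ x) with hGd
  have hBcard : ∀ S ∈ B, S.card = n ∧ S ⊆ 𝓔 := by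
    intro S hS
    simp only [hB, mem_filter, erGraphs, mem_powerset] at hS
    exact ⟨hS.1.2, hS.1.1⟩
  calc B.card * n.choose d
      = ∑ S ∈ B, (S.powersetCard d).card := by
        rw [Finset.sum_congr rfl fun S hS => ?_, Finset.sum_const, smul_eq_mul]
        rw [Finset.card_powersetCard, (hBcard S hS).1]
    _ = (B.sigma fun S => S.powersetCard d).card := (Finset.card_sigma _ _).symm
    _ ≤ (Gd.sigma fun E => (𝓔.powersetCard n).filter fun S => E ⊆ S).card := by
        apply Finset.card_le_card_of_injOn (f := fun p => ⟨p.2, p.1⟩)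
        · rintro ⟨S, E⟩ hp
          simp only [mem_coe, Finset.mem_sigma, Finset.mem_powersetCard] at hp ⊢
          obtain ⟨hSB, hES, hEd⟩ := hp
          obtain ⟨hSn, hS𝓔⟩ := hBcard S hSB
          have hmuS : (matchingNumber S : ℝ) ≥ x + L := by
            simp only [hB, mem_filter] at hSB; exact hSB.2
          have hkey : matchingNumber S ≤ matchingNumber E + (S \ E).card :=
            matchingNumber_le_of_subset hES
          have hsd : (S \ E).card = n - d := by
            rw [Finset.card_sdiff_of_subset hES, hSn, hEd]
          have hmuE : (matchingNumber E : ℝ) ≥ x := by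
            have h1 : (matchingNumber S : ℝ) ≤ matchingNumber E + ((n : ℝ) - d) := by
              have := (Nat.cast_le (α := ℝ)).mpr hkey
              push_cast at this
              rw [hsd] at this
              push_cast [Nat.cast_sub hd] at this
              linarith [this]
            linarith
          refine ⟨?_, Finset.mem_filter.mpr ⟨Finset.mem_powersetCard.mpr ⟨hS𝓔, hSn⟩, hES⟩⟩
          simp only [hGd, mem_filter, Finset.mem_powersetCard]
          exact ⟨⟨hES.trans hS𝓔, hEd⟩, hmuE⟩
        · rintro ⟨S1, E1⟩ h1 ⟨S2, E2⟩ h2 h12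
          simp only [Sigma.mk.inj_iff] at h12
          obtain ⟨hE, hS⟩ := h12
          subst hE
          simp only [heq_eq_eq] at hS
          subst hS
          rfl
    _ = ∑ E ∈ Gd, ((𝓔.powersetCard n).filter fun S => E ⊆ S).card := Finset.card_sigma _ _
    _ ≤ ∑ E ∈ Gd, (𝓔.card - d).choose (n - d) := by
        refine Finset.sum_le_sum fun E hE => ?_
        simp only [hGd, mem_filter, Finset.mem_powersetCard] at hE
        exact card_supersets_le n d n 𝓔 E hE.1.1 hE.1.2
    _ = Gd.card * (𝓔.card - d).choose (n - d) := by rw [Finset.sum_const, smul_eq_mul]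

lemma T_eq_filter (n d : ℕ) :
    (∑ E ∈ (Finset.univ.filter fun e : Finset (Fin n) => e.card = 2).powersetCard d,
        sCount n E) =
      ((edgeSamples n n).filter fun f => (Finset.univ.image f).card = d).card := by
  classical
  rw [filter_image_partition n (fun E => E.card = d), Finset.powersetCard_eq_filter]

lemma uniform_sum (n d : ℕ) (A : Finset (Finset (Finset (Fin n))))
    (hA : A ⊆ (Finset.univ.filter fun e : Finset (Fin n) => e.card = 2).powersetCard d) :
    (∑ E ∈ A, sCount n E) *
        ((Finset.univ.filter fun e : Finset (Fin n) => e.card = 2).powersetCard d).card =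
      A.card * ∑ E ∈ (Finset.univ.filter fun e : Finset (Fin n) => e.card = 2).powersetCard d,
        sCount n E := by
  classical
  set 𝓔 := Finset.univ.filter fun e : Finset (Fin n) => e.card = 2 with h𝓔
  have hmem : ∀ E ∈ 𝓔.powersetCard d, (∀ a ∈ E, a.card = 2) ∧ E.card = d := by
    intro E hE
    rw [Finset.mem_powersetCard] at hE
    refine ⟨fun a ha => ?_, hE.2⟩
    have := hE.1 ha
    simp only [h𝓔, mem_filter] at this
    exact this.2
  calc (∑ E ∈ A, sCount n E) * (𝓔.powersetCard d).card
      = ∑ E ∈ A, ∑ E' ∈ 𝓔.powersetCard d, sCount n E := by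
        rw [Finset.sum_mul]
        exact Finset.sum_congr rfl fun E _ => by rw [Finset.sum_const, smul_eq_mul, mul_comm]
    _ = ∑ E ∈ A, ∑ E' ∈ 𝓔.powersetCard d, sCount n E' := by
        refine Finset.sum_congr rfl fun E hE => Finset.sum_congr rfl fun E' hE' => ?_
        obtain ⟨h1, h2⟩ := hmem E (hA hE)
        obtain ⟨h1', h2'⟩ := hmem E' hE'
        exact sCount_eq n h1 h1' (h2.trans h2'.symm)
    _ = A.card * ∑ E ∈ 𝓔.powersetCard d, sCount n E := by
        rw [Finset.sum_const, smul_eq_mul]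

lemma sum_T (n : ℕ) :
    (∑ d ∈ Finset.range (n + 1),
        ((edgeSamples n n).filter fun f => (Finset.univ.image f).card = d).card) =
      (edgeSamples n n).card := by
  classical
  rw [Finset.card_eq_sum_card_fiberwise (f := fun f : Fin n → Finset (Fin n) =>
      (Finset.univ.image f).card) (t := Finset.range (n + 1))]
  intro f _
  simp only [mem_coe, Finset.mem_range]
  have : (Finset.univ.image f).card ≤ n := by
    calc (Finset.univ.image f).card ≤ (Finset.univ : Finset (Fin n)).card :=
      Finset.card_image_le
    _ = n := by rw [Finset.card_univ, Fintype.card_fin]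
  omega

lemma sum_fiber_collisions (n : ℕ) :
    (∑ d ∈ Finset.range (n + 1),
        ((edgeSamples n n).filter fun f => (Finset.univ.image f).card = d).card * (n - d)) =
      ∑ f ∈ edgeSamples n n, (n - (Finset.univ.image f).card) := by
  classical
  rw [← Finset.sum_fiberwise_of_maps_to (g := fun f : Fin n → Finset (Fin n) =>
      (Finset.univ.image f).card) (t := Finset.range (n + 1))
      (f := fun f : Fin n → Finset (Fin n) => n - (Finset.univ.image f).card)]
  · refine Finset.sum_congr rfl fun d _ => ?_
    rw [Finset.sum_congr rfl (fun f hf => ?_), Finset.sum_const, smul_eq_mul]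
    rw [Finset.mem_filter] at hf
    rw [hf.2]
  · intro f _
    simp only [Finset.mem_range]
    have : (Finset.univ.image f).card ≤ n := by
      calc (Finset.univ.image f).card ≤ (Finset.univ : Finset (Fin n)).card :=
        Finset.card_image_le
      _ = n := by rw [Finset.card_univ, Fintype.card_fin]
    omega


lemma stepA (n : ℕ) (x L : ℝ) (hNn : n ≤ (Finset.univ.filter fun e : Finset (Fin n) => e.card = 2).card) :
    (((erGraphs n n).filter fun S => (matchingNumber S : ℝ) ≥ x + L).card) *
      ∑ d ∈ (Finset.range (n+1)).filter (fun d : ℕ => (n:ℝ) - d ≤ L),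
        ((edgeSamples n n).filter fun f => (Finset.univ.image f).card = d).card ≤
    (((edgeSamples n n).filter fun f =>
        (matchingNumber (Finset.univ.image f) : ℝ) ≥ x).card) *
      ((Finset.univ.filter fun e : Finset (Fin n) => e.card = 2).card).choose n := by
  set 𝓔 := Finset.univ.filter fun e : Finset (Fin n) => e.card = 2 with h𝓔
  set N := 𝓔.card with hN
  set D := (Finset.range (n+1)).filter (fun d : ℕ => (n:ℝ) - d ≤ L) with hD
  set T := fun d => ((edgeSamples n n).filter fun f => (Finset.univ.image f).card = d).card with hT
  set Gd := fun d => ((𝓔.powersetCard d).filter fun E => (matchingNumber E : ℝ) ≥ x) with hGd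
  set W := fun d => ∑ E ∈ Gd d, sCount n E with hW
  set BC := ((erGraphs n n).filter fun S => (matchingNumber S : ℝ) ≥ x + L).card with hBC
  set GC := ((edgeSamples n n).filter fun f =>
      (matchingNumber (Finset.univ.image f) : ℝ) ≥ x).card with hGC
  have h2 : (∑ d ∈ D, W d) ≤ GC := by
    have h1 : GC = ∑ E ∈ (𝓔.powerset.filter fun E => (matchingNumber E : ℝ) ≥ x),
        sCount n E := filter_image_partition n (fun E => (matchingNumber E : ℝ) ≥ x)
    rw [h1]
    have hdisj : (D : Set ℕ).PairwiseDisjoint Gd := by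
      intro d1 _ d2 _ hne
      apply Finset.disjoint_left.mpr
      intro E hE1 hE2
      simp only [hGd, Finset.mem_filter, Finset.mem_powersetCard] at hE1 hE2
      exact hne (hE1.1.2 ▸ hE2.1.2 ▸ rfl)
    rw [← Finset.sum_biUnion hdisj]
    apply Finset.sum_le_sum_of_subset
    intro E hE
    rw [Finset.mem_biUnion] at hE
    obtain ⟨d, _, hEd⟩ := hE
    simp only [hGd, Finset.mem_filter, Finset.mem_powersetCard] at hEd
    simp only [Finset.mem_filter, Finset.mem_powerset]
    exact ⟨hEd.1.1, hEd.2⟩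
  have h3 : ∀ d ∈ D, BC * T d ≤ W d * N.choose n := by
    intro d hd
    simp only [hD, Finset.mem_filter, Finset.mem_range] at hd
    have hdn : d ≤ n := by omega
    have hkey : (BC * T d) * n.choose d ≤ (W d * N.choose n) * n.choose d := by
      have e1 : (W d * N.choose n) * n.choose d
          = (W d * N.choose d) * (N - d).choose (n - d) := by
        rw [mul_assoc, Nat.choose_mul (n := N) hdn, ← mul_assoc]
      have e2 : W d * N.choose d = (Gd d).card * T d := by
        have := uniform_sum n d (Gd d) (Finset.filter_subset _ _)
        rw [Finset.card_powersetCard] at this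
        rw [hW]
        rw [this, T_eq_filter]
      have e3 : (BC * n.choose d) * T d ≤ ((Gd d).card * (N - d).choose (n - d)) * T d :=
        Nat.mul_le_mul_right _ (shadow_bound n d x L hdn hd.2)
      calc (BC * T d) * n.choose d = (BC * n.choose d) * T d := by ring
        _ ≤ ((Gd d).card * (N - d).choose (n - d)) * T d := e3
        _ = ((Gd d).card * T d) * (N - d).choose (n - d) := by ring
        _ = (W d * N.choose d) * (N - d).choose (n - d) := by rw [e2]
        _ = (W d * N.choose n) * n.choose d := e1.symm
    exact Nat.le_of_mul_le_mul_right hkey (Nat.choose_pos hdn)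
  calc BC * ∑ d ∈ D, T d = ∑ d ∈ D, BC * T d := Finset.mul_sum _ _ _
    _ ≤ ∑ d ∈ D, W d * N.choose n := Finset.sum_le_sum h3
    _ = (∑ d ∈ D, W d) * N.choose n := (Finset.sum_mul _ _ _).symm
    _ ≤ GC * N.choose n := Nat.mul_le_mul_right _ h2

lemma stepB (n : ℕ) (L : ℝ) (hL0 : 0 < L) (hn : 1 ≤ n) :
    ((((Finset.univ.filter fun e : Finset (Fin n) => e.card = 2)).card : ℝ))^n * (1 - 1/L) ≤
      ((∑ d ∈ (Finset.range (n+1)).filter (fun d : ℕ => (n:ℝ) - d ≤ L),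
        ((edgeSamples n n).filter fun f => (Finset.univ.image f).card = d).card : ℕ) : ℝ) := by
  set 𝓔 := Finset.univ.filter fun e : Finset (Fin n) => e.card = 2 with h𝓔
  set N := 𝓔.card with hN
  set T := fun d => ((edgeSamples n n).filter fun f => (Finset.univ.image f).card = d).card with hT
  have htot : (∑ d ∈ Finset.range (n+1), T d) = N ^ n := by
    rw [hT]
    rw [sum_T, card_edgeSamples]
  have hsplit := Finset.sum_filter_add_sum_filter_not (Finset.range (n+1))
    (fun d : ℕ => (n:ℝ) - d ≤ L) T
  have hmark : ((∑ d ∈ (Finset.range (n+1)).filter (fun d : ℕ => ¬((n:ℝ) - d ≤ L)), T d : ℕ) : ℝ) * L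
      ≤ (N:ℝ)^n := by
    have c1 : ((∑ d ∈ (Finset.range (n+1)).filter (fun d : ℕ => ¬((n:ℝ) - d ≤ L)), T d : ℕ) : ℝ) * L
        = ∑ d ∈ (Finset.range (n+1)).filter (fun d : ℕ => ¬((n:ℝ) - d ≤ L)), (T d : ℝ) * L := by
      rw [Nat.cast_sum, Finset.sum_mul]
    rw [c1]
    calc ∑ d ∈ (Finset.range (n+1)).filter (fun d : ℕ => ¬((n:ℝ) - d ≤ L)), (T d : ℝ) * L
        ≤ ∑ d ∈ (Finset.range (n+1)).filter (fun d : ℕ => ¬((n:ℝ) - d ≤ L)),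
            (T d : ℝ) * ((n:ℝ) - d) := by
          refine Finset.sum_le_sum fun d hd => ?_
          simp only [Finset.mem_filter, Finset.mem_range] at hd
          have : L < (n:ℝ) - d := by push_neg at hd; exact hd.2
          exact mul_le_mul_of_nonneg_left this.le (Nat.cast_nonneg _)
      _ ≤ ∑ d ∈ Finset.range (n+1), (T d : ℝ) * ((n:ℝ) - d) := by
          apply Finset.sum_le_sum_of_subset_of_nonneg (Finset.filter_subset _ _)
          intro d hd _
          rw [Finset.mem_range] at hd
          have h1 : (d:ℝ) ≤ (n:ℝ) := by exact_mod_cast Nat.lt_succ_iff.mp hd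
          have h2 : (0:ℝ) ≤ (n:ℝ) - d := by linarith
          positivity
      _ = ((∑ d ∈ Finset.range (n+1), T d * (n - d) : ℕ) : ℝ) := by
          rw [Nat.cast_sum]
          refine (Finset.sum_congr rfl fun d hd => ?_)
          rw [Finset.mem_range] at hd
          have hdn : d ≤ n := by omega
          push_cast [Nat.cast_sub hdn]
          ring
      _ ≤ ((N ^ n : ℕ) : ℝ) := by
          apply Nat.cast_le.mpr
          rw [hT]
          rw [sum_fiber_collisions]
          exact sum_collisions_le n hn
      _ = (N:ℝ)^n := by push_cast; ring
  have hDc : ((∑ d ∈ (Finset.range (n+1)).filter (fun d : ℕ => ¬((n:ℝ) - d ≤ L)), T d : ℕ) : ℝ)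
      ≤ (N:ℝ)^n / L := by
    rw [le_div_iff₀ hL0]
    exact hmark
  have heq : ((∑ d ∈ (Finset.range (n+1)).filter (fun d : ℕ => (n:ℝ) - d ≤ L), T d : ℕ) : ℝ)
      = (N:ℝ)^n - ((∑ d ∈ (Finset.range (n+1)).filter (fun d : ℕ => ¬((n:ℝ) - d ≤ L)), T d : ℕ) : ℝ) := by
    have := congrArg (Nat.cast (R := ℝ)) hsplit
    rw [htot] at this
    push_cast at this ⊢
    linarith
  rw [heq]
  have hfin : (N:ℝ)^n * (1 - 1/L) = (N:ℝ)^n - (N:ℝ)^n / L := by ring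
  rw [hfin]
  linarith

lemma uprob_eq {α : Type*} [DecidableEq α] (Ω : Finset α) (p : α → Prop) [DecidablePred p] :
    uprob Ω p = (Ω.filter p).card / Ω.card := by
  unfold uprob
  rw [Finset.filter_congr_decidable]

lemma matchingNumber_empty {V : Type*} [DecidableEq V] :
    matchingNumber (∅ : Finset (Finset V)) = 0 := by
  unfold matchingNumber
  apply Nat.le_antisymm _ (Nat.zero_le _)
  apply Finset.sup_le
  intro M hM
  simp only [Finset.powerset_empty, Finset.mem_filter, Finset.mem_singleton] at hM
  rw [hM.1]
  simp

theorem matching_with_replacement_vs_erdos_renyi (n : ℕ) (x : ℝ) :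
    uprob (edgeSamples n n) (fun f =>
        (matchingNumber (Finset.univ.image f) : ℝ) ≥ x) ≥
      uprob (erGraphs n n) (fun E => (matchingNumber E : ℝ) ≥ x + Real.log n) *
        (1 - 1 / Real.log n) := by
  classical
  rcases Nat.lt_or_ge n 2 with hn2 | hn2
  · -- n = 0 or n = 1
    interval_cases n
    · -- n = 0
      have him : ∀ f : Fin 0 → Finset (Fin 0), Finset.univ.image f = ∅ := by
        intro f
        simp
      have herE : ∀ E ∈ erGraphs 0 0, E = (∅ : Finset (Finset (Fin 0))) := by
        intro E hE
        simp only [erGraphs, Finset.mem_filter, Finset.mem_powerset] at hE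
        have h𝓔 : (Finset.univ.filter fun e : Finset (Fin 0) => e.card = 2) = ∅ := by
          apply Finset.eq_empty_of_forall_notMem
          intro e he
          simp only [Finset.mem_filter] at he
          have : e.card ≤ 1 := by
            have := Finset.card_le_univ e
            simpa using this.trans (by simp)
          omega
        rw [h𝓔] at hE
        exact Finset.subset_empty.mp hE.1
      rw [show Real.log (0:ℕ) = 0 by norm_num [Real.log_zero]]
      rw [show (1:ℝ) - 1/0 = 1 by norm_num]
      rw [mul_one]
      by_cases hx : (0:ℝ) ≥ x
      · -- LHS = 1, RHS ≤ 1
        have hLHS : uprob (edgeSamples 0 0) (fun f =>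
            (matchingNumber (Finset.univ.image f) : ℝ) ≥ x) = 1 := by
          unfold uprob
          rw [Finset.filter_true_of_mem]
          · apply div_self
            have : (edgeSamples 0 0).card = 1 := by
              rw [card_edgeSamples]
              simp
            rw [this]; norm_num
          · intro f _
            rw [him f, matchingNumber_empty]
            exact_mod_cast hx
        rw [hLHS]
        unfold uprob
        rcases Nat.eq_zero_or_pos (erGraphs 0 0).card with h0 | h0
        · rw [h0]; simp
        · apply div_le_one_of_le₀
          · exact Nat.cast_le.mpr (Finset.card_le_card (Finset.filter_subset _ _))
          · positivity
      · -- LHS = 0, RHS = 0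
        push_neg at hx
        have hRHS : uprob (erGraphs 0 0) (fun E =>
            (matchingNumber E : ℝ) ≥ x + 0) = 0 := by
          unfold uprob
          rw [Finset.filter_false_of_mem]
          · simp
          · intro E hE
            rw [herE E hE, matchingNumber_empty]
            push_cast
            intro hcon
            linarith
        rw [hRHS]
        unfold uprob
        positivity
    · -- n = 1
      have hΩ : edgeSamples 1 1 = ∅ := by
        apply Finset.eq_empty_of_forall_notMem
        intro f hf
        simp only [edgeSamples, Finset.mem_filter] at hf
        have h2 := hf.2 0
        have : (f 0).card ≤ 1 := by
          have := Finset.card_le_univ (f 0)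
          simpa using this.trans (by simp)
        omega
      have her : erGraphs 1 1 = ∅ := by
        apply Finset.eq_empty_of_forall_notMem
        intro E hE
        simp only [erGraphs, Finset.mem_filter, Finset.mem_powerset] at hE
        have h𝓔 : (Finset.univ.filter fun e : Finset (Fin 1) => e.card = 2) = ∅ := by
          apply Finset.eq_empty_of_forall_notMem
          intro e he
          simp only [Finset.mem_filter] at he
          have : e.card ≤ 1 := by
            have := Finset.card_le_univ e
            simpa using this.trans (by simp)
          omega
        rw [h𝓔] at hE
        have : E = ∅ := Finset.subset_empty.mp hE.1
        rw [this] at hE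
        simp at hE
      unfold uprob
      rw [hΩ, her]
      simp
  · -- main case : n ≥ 2
    set L := Real.log n with hLdef
    have hL0 : 0 < L := Real.log_pos (by exact_mod_cast hn2)
    by_cases hfac : 1 - 1 / L ≤ 0
    · have h1 : (0:ℝ) ≤ uprob (edgeSamples n n) (fun f =>
          (matchingNumber (Finset.univ.image f) : ℝ) ≥ x) := by
        unfold uprob; positivity
      have h2 : (0:ℝ) ≤ uprob (erGraphs n n) (fun E => (matchingNumber E : ℝ) ≥ x + L) := by
        unfold uprob; positivity
      calc uprob (erGraphs n n) (fun E => (matchingNumber E : ℝ) ≥ x + L) * (1 - 1/L)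
          ≤ 0 := mul_nonpos_of_nonneg_of_nonpos h2 hfac
        _ ≤ _ := h1
    push_neg at hfac
    have hL1 : 1 < L := by
      have := (div_lt_one hL0).mp (by linarith)
      linarith
    have hn3 : 3 ≤ n := by
      by_contra hc
      push_neg at hc
      interval_cases n
      · have : L < 1 := by
          rw [hLdef]
          calc Real.log (2:ℕ) = Real.log 2 := by norm_num
            _ < 0.6931471808 := Real.log_two_lt_d9
            _ < 1 := by norm_num
        linarith
    -- main chain
    set 𝓔 := Finset.univ.filter fun e : Finset (Fin n) => e.card = 2 with h𝓔
    have hNch : 𝓔.card = n.choose 2 := by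
      rw [h𝓔, show (Finset.univ.filter fun e : Finset (Fin n) => e.card = 2)
          = Finset.univ.powersetCard 2 by
        rw [Finset.powersetCard_eq_filter, Finset.powerset_univ]]
      rw [Finset.card_powersetCard, Finset.card_univ, Fintype.card_fin]
    have hNn : n ≤ 𝓔.card := by
      rw [hNch, Nat.choose_two_right]
      rw [Nat.le_div_iff_mul_le (by norm_num : 0 < 2)]
      have h2 : 2 ≤ n - 1 := by omega
      calc n * 2 ≤ n * (n - 1) := Nat.mul_le_mul_left n h2
        _ ≤ n * (n - 1) := le_refl _
    have hNpos : 0 < 𝓔.card := by omega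
    have hcpos : 0 < (𝓔.card).choose n := Nat.choose_pos hNn
    have hA := stepA n x L hNn
    have hB := stepB n L hL0 (by omega)
    have hercard : (erGraphs n n).card = (𝓔.card).choose n := by
      rw [erGraphs, ← Finset.powersetCard_eq_filter, Finset.card_powersetCard]
    rw [uprob_eq, uprob_eq, card_edgeSamples, hercard]
    rw [ge_iff_le, div_mul_eq_mul_div, div_le_div_iff₀ (by positivity) (by positivity)]
    set SD := ∑ d ∈ (Finset.range (n+1)).filter (fun d : ℕ => (n:ℝ) - d ≤ L),
        ((edgeSamples n n).filter fun f => (Finset.univ.image f).card = d).card with hSD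
    set BC := ((erGraphs n n).filter fun S => (matchingNumber S : ℝ) ≥ x + L).card with hBC
    set GC := ((edgeSamples n n).filter fun f =>
        (matchingNumber (Finset.univ.image f) : ℝ) ≥ x).card with hGC
    have hAcast : (BC:ℝ) * SD ≤ (GC:ℝ) * ((𝓔.card).choose n) := by exact_mod_cast hA
    calc (BC:ℝ) * (1 - 1/L) * ((𝓔.card ^ n : ℕ) : ℝ)
        = (BC:ℝ) * (((𝓔.card : ℝ))^n * (1 - 1/L)) := by push_cast; ring
      _ ≤ (BC:ℝ) * (SD : ℝ) := mul_le_mul_of_nonneg_left hB (Nat.cast_nonneg _)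
      _ ≤ (GC:ℝ) * ((𝓔.card).choose n) := hAcast
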